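/- arXiv:1211.2291 — 2 statements merged into one kernel-verified Lean document; each statement's English description precedes it below -/
import Mathlib

section
/- In the binary case M = 2 with R(1,λ) = Σ_a λ_a D(q_1^a||q_2^a) and R(2,λ) = Σ_a λ_a D(q_2^a||q_1^a): if some single action a* simultaneously maximizes both a ↦ D(q_1^a||q_2^a) and a ↦ D(q_2^a||q_1^a) over A, then max_{λ∈Λ(A)} R̄(λ) = R̄*, where R̄(λ) is the harmonic mean of R(1,λ) and R(2,λ) and R̄* is the harmonic mean of max_a D(q_1^a||q_2^a) and max_a D(q_2^a||q_1^a). Conversely, if the argmax sets of the two maps are disjoint, then max_{λ∈Λ(A)} R̄(λ) < R̄*. -/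
open MeasureTheory Finset

private lemma harm_le {x y X Y : ℝ} (hx : 0 < x) (hy : 0 < y)
    (hX : x ≤ X) (hY : y ≤ Y) :
    2 / (x⁻¹ + y⁻¹) ≤ 2 / (X⁻¹ + Y⁻¹) := by
  have hXp : 0 < X := hx.trans_le hX
  have hYp : 0 < Y := hy.trans_le hY
  have h1 : X⁻¹ + Y⁻¹ ≤ x⁻¹ + y⁻¹ :=
    add_le_add (inv_anti₀ hx hX) (inv_anti₀ hy hY)
  have h2 : 0 < X⁻¹ + Y⁻¹ := by positivity
  exact div_le_div_of_nonneg_left (by norm_num) h2 h1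

private lemma harm_lt {x y X Y : ℝ} (hx : 0 < x) (hy : 0 < y)
    (hX : x ≤ X) (hY : y ≤ Y) (hs : x < X ∨ y < Y) :
    2 / (x⁻¹ + y⁻¹) < 2 / (X⁻¹ + Y⁻¹) := by
  have hXp : 0 < X := hx.trans_le hX
  have hYp : 0 < Y := hy.trans_le hY
  have h1 : X⁻¹ + Y⁻¹ < x⁻¹ + y⁻¹ := by
    rcases hs with h | h
    · exact add_lt_add_of_lt_of_le (inv_strictAnti₀ hx h) (inv_anti₀ hy hY)
    · exact add_lt_add_of_le_of_lt (inv_anti₀ hx hX) (inv_strictAnti₀ hy h)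
  have h2 : 0 < X⁻¹ + Y⁻¹ := by positivity
  exact div_lt_div_of_pos_left (by norm_num) h2 h1

/-- Active binary hypothesis testing: if some single action simultaneously
maximizes both directed KL divergences, the best non-adaptive harmonic-mean
reliability `max_λ R̄(λ)` equals `R̄*`; if the two argmax sets are disjoint,
then `R̄(λ) < R̄*` for every `λ`, i.e. there is a strict adaptivity gain. -/
theorem binary_adaptivity_gain_characterization
    {A : Type*} [Fintype A] [Nonempty A]
    (hA : (Finset.univ : Finset A).Nonempty)
    {Z : Type*} [MeasurableSpace Z] (μ : Measure Z)
    (q1 q2 : A → Z → ℝ)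
    (hq10 : ∀ a z, 0 ≤ q1 a z) (hq20 : ∀ a z, 0 ≤ q2 a z)
    (hq11 : ∀ a, ∫ z, q1 a z ∂μ = 1) (hq21 : ∀ a, ∫ z, q2 a z ∂μ = 1)
    (d1 d2 : A → ℝ)
    (hd1 : ∀ a, d1 a = ∫ z, q1 a z * Real.log (q1 a z / q2 a z) ∂μ)
    (hd2 : ∀ a, d2 a = ∫ z, q2 a z * Real.log (q2 a z / q1 a z) ∂μ)
    (hd1pos : ∀ a, 0 < d1 a) (hd2pos : ∀ a, 0 < d2 a)
    (R1 R2 : (A → ℝ) → ℝ)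
    (hR1 : ∀ l, R1 l = ∑ a : A, l a * d1 a)
    (hR2 : ∀ l, R2 l = ∑ a : A, l a * d2 a)
    (Rbar : (A → ℝ) → ℝ)
    (hRbar : ∀ l, Rbar l = 2 / ((R1 l)⁻¹ + (R2 l)⁻¹))
    (RbarStar : ℝ)
    (hRbarStar : RbarStar =
      2 / ((Finset.univ.sup' hA d1)⁻¹ + (Finset.univ.sup' hA d2)⁻¹)) :
    ((∃ astar : A, (∀ a, d1 a ≤ d1 astar) ∧ (∀ a, d2 a ≤ d2 astar)) →
        IsGreatest {x : ℝ | ∃ l ∈ stdSimplex ℝ A, Rbar l = x} RbarStar) ∧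
    ({a | ∀ b, d1 b ≤ d1 a} ∩ {a | ∀ b, d2 b ≤ d2 a} = ∅ →
        ∀ l ∈ stdSimplex ℝ A, Rbar l < RbarStar) := by
  classical
  set D1 := Finset.univ.sup' hA d1 with hD1def
  set D2 := Finset.univ.sup' hA d2 with hD2def
  obtain ⟨a0⟩ := ‹Nonempty A›
  have hD1pos : 0 < D1 := (hd1pos a0).trans_le (le_sup' d1 (mem_univ a0))
  have hD2pos : 0 < D2 := (hd2pos a0).trans_le (le_sup' d2 (mem_univ a0))
  have hex : ∀ l ∈ stdSimplex ℝ A, ∃ a : A, 0 < l a := by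
    intro l hl
    by_contra h
    push_neg at h
    have : (∑ a : A, l a) ≤ 0 := Finset.sum_nonpos fun a _ => h a
    rw [hl.2] at this; linarith
  have hfacts : ∀ l ∈ stdSimplex ℝ A,
      0 < R1 l ∧ 0 < R2 l ∧ R1 l ≤ D1 ∧ R2 l ≤ D2 := by
    intro l hl
    obtain ⟨a1, ha1⟩ := hex l hl
    refine ⟨?_, ?_, ?_, ?_⟩
    · rw [hR1]
      exact Finset.sum_pos' (fun a _ => mul_nonneg (hl.1 a) (hd1pos a).le)
        ⟨a1, mem_univ a1, mul_pos ha1 (hd1pos a1)⟩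
    · rw [hR2]
      exact Finset.sum_pos' (fun a _ => mul_nonneg (hl.1 a) (hd2pos a).le)
        ⟨a1, mem_univ a1, mul_pos ha1 (hd2pos a1)⟩
    · rw [hR1]
      calc ∑ a : A, l a * d1 a ≤ ∑ a : A, l a * D1 :=
            Finset.sum_le_sum fun a _ =>
              mul_le_mul_of_nonneg_left (le_sup' d1 (mem_univ a)) (hl.1 a)
        _ = D1 := by rw [← Finset.sum_mul, hl.2, one_mul]
    · rw [hR2]
      calc ∑ a : A, l a * d2 a ≤ ∑ a : A, l a * D2 :=
            Finset.sum_le_sum fun a _ =>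
              mul_le_mul_of_nonneg_left (le_sup' d2 (mem_univ a)) (hl.1 a)
        _ = D2 := by rw [← Finset.sum_mul, hl.2, one_mul]
  constructor
  · rintro ⟨astar, h1, h2⟩
    have hD1eq : D1 = d1 astar :=
      le_antisymm (Finset.sup'_le hA d1 fun a _ => h1 a) (le_sup' d1 (mem_univ astar))
    have hD2eq : D2 = d2 astar :=
      le_antisymm (Finset.sup'_le hA d2 fun a _ => h2 a) (le_sup' d2 (mem_univ astar))
    constructor
    · refine ⟨fun a => if a = astar then 1 else 0, ⟨fun a => ?_, ?_⟩, ?_⟩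
      · dsimp only; split <;> norm_num
      · simp
      · rw [hRbar, hR1, hR2, hRbarStar, hD1eq, hD2eq]
        simp [ite_mul]
    · rintro x ⟨l, hl, rfl⟩
      obtain ⟨p1, p2, b1, b2⟩ := hfacts l hl
      rw [hRbar, hRbarStar]
      exact harm_le p1 p2 b1 b2
  · intro hdisj l hl
    obtain ⟨p1, p2, b1, b2⟩ := hfacts l hl
    have hstrict : R1 l < D1 ∨ R2 l < D2 := by
      by_contra h
      push_neg at h
      have e1 : R1 l = D1 := le_antisymm b1 h.1
      have e2 : R2 l = D2 := le_antisymm b2 h.2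
      obtain ⟨a1, ha1⟩ := hex l hl
      have key : ∀ (d : A → ℝ) (D : ℝ), (∀ a, d a ≤ D) →
          (∑ a : A, l a * d a) = D → d a1 = D := by
        intro d D hdD hsum
        have hzero : ∑ a : A, l a * (D - d a) = 0 := by
          have : ∑ a : A, l a * (D - d a)
              = (∑ a : A, l a) * D - ∑ a : A, l a * d a := by
            rw [Finset.sum_mul]
            rw [← Finset.sum_sub_distrib]
            congr 1; ext a; ring
          rw [this, hl.2, one_mul, hsum, sub_self]
        have hterm : l a1 * (D - d a1) = 0 :=
          (Finset.sum_eq_zero_iff_of_nonneg fun a _ =>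
            mul_nonneg (hl.1 a) (sub_nonneg.2 (hdD a))).1 hzero a1 (mem_univ a1)
        have := (mul_eq_zero.1 hterm).resolve_left ha1.ne'
        linarith [sub_eq_zero.1 this]
      have k1 : d1 a1 = D1 := key d1 D1 (fun a => le_sup' d1 (mem_univ a)) (hR1 l ▸ e1)
      have k2 : d2 a1 = D2 := key d2 D2 (fun a => le_sup' d2 (mem_univ a)) (hR2 l ▸ e2)
      have hmem : a1 ∈ ({a | ∀ b, d1 b ≤ d1 a} ∩ {a | ∀ b, d2 b ≤ d2 a}) :=
        ⟨fun b => k1 ▸ le_sup' d1 (mem_univ b), fun b => k2 ▸ le_sup' d2 (mem_univ b)⟩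
      rw [hdisj] at hmem
      exact hmem
    rw [hRbar, hRbarStar]
    exact harm_lt p1 p2 b1 b2 hstrict
end

section
/- Fix λ ∈ Λ(A) and i ∈ Ω, let R = min_{j≠i} Σ_a λ_a D(q_i^a||q_j^a) > 0, and suppose per-step log-likelihood increments are independent and bounded: |log(q_i^{A(t)}/q_j^{A(t)})| ≤ log ξ. Define τ_i = min{n : min_{j≠i} ρ_i(n)/ρ_j(n) ≥ c} for a threshold c > 1, and T_i = log c - min_{k≠i} log(ρ_i/ρ_k). Then for any ι > 0 and all n > (T_i/R)(1+ι): P(τ_i > n | θ=i) ≤ (M-1)·exp(-n·(2ι²/(1+ι)²)·(R/(2 log ξ))²). -/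
open MeasureTheory ProbabilityTheory Finset


lemma hoeff_fun (p : ℝ) (hp0 : 0 ≤ p) (hp1 : p ≤ 1) (h : ℝ) :
    (1 - p) + p * Real.exp h ≤ Real.exp (p * h + h ^ 2 / 8) := by
  set den : ℝ → ℝ := fun s => 1 - p + p * Real.exp s with hden
  have hdenpos : ∀ s, 0 < den s := by
    intro s
    rcases lt_or_eq_of_le hp1 with hlt | heq
    · have h1 : 0 < 1 - p := by linarith
      have h2 : 0 ≤ p * Real.exp s := mul_nonneg hp0 (Real.exp_pos s).le
      simp only [hden]; linarith
    · have : p * Real.exp s = Real.exp s := by rw [heq, one_mul]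
      simp only [hden, this, ← heq]
      simpa using Real.exp_pos s
  set Q : ℝ → ℝ := fun s => p * Real.exp s / den s with hQ
  have hQ01 : ∀ s, 0 ≤ Q s ∧ Q s ≤ 1 := by
    intro s
    constructor
    · exact div_nonneg (mul_nonneg hp0 (Real.exp_pos s).le) (hdenpos s).le
    · rw [hQ, div_le_one (hdenpos s)]
      simp only [hden]; nlinarith [Real.exp_pos s]
  have hdenD : ∀ s, HasDerivAt den (p * Real.exp s) s := by
    intro s
    exact ((Real.hasDerivAt_exp s).const_mul p).const_add (1 - p)
  have hQD : ∀ s, HasDerivAt Q (Q s * (1 - Q s)) s := by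
    intro s
    have h1 : HasDerivAt (fun s => p * Real.exp s) (p * Real.exp s) s :=
      (Real.hasDerivAt_exp s).const_mul p
    have h2 := h1.div (hdenD s) (hdenpos s).ne'
    have h3 : (p * Real.exp s * den s - p * Real.exp s * (p * Real.exp s)) / den s ^ 2
        = Q s * (1 - Q s) := by
      rw [hQ]
      have := (hdenpos s).ne'
      field_simp
    rwa [h3] at h2
  have hQlip : ∀ x y : ℝ, |Q x - Q y| ≤ 1/4 * |x - y| := by
    intro x y
    have := Convex.norm_image_sub_le_of_norm_deriv_le
      (f := Q) (C := 1/4) (s := Set.univ)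
      (fun z _ => (hQD z).differentiableAt)
      (fun z _ => by
        rw [(hQD z).deriv]
        rw [Real.norm_eq_abs, abs_le]
        obtain ⟨hz0, hz1⟩ := hQ01 z
        obtain ⟨h4, h5⟩ := hQ01 z
        constructor <;> nlinarith [sq_nonneg (Q z - 1/2)])
      convex_univ (Set.mem_univ y) (Set.mem_univ x)
    simpa [Real.norm_eq_abs] using this
  -- g h = h^2/8 - (log (den h) - p h), show g ≥ 0
  set g : ℝ → ℝ := fun s => s ^ 2 / 8 - (Real.log (den s) - p * s) with hg
  have hQ0 : Q 0 = p := by simp [hQ, hden]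
  have hgD : ∀ s, HasDerivAt g (s / 4 - (Q s - p)) s := by
    intro s
    have h1 : HasDerivAt (fun s : ℝ => s ^ 2 / 8) (s / 4) s := by
      have := (hasDerivAt_pow 2 s).div_const 8
      exact this.congr_deriv (by push_cast; ring)
    have h2 : HasDerivAt (fun s => Real.log (den s)) (Q s) s := by
      have := (hdenD s).log (hdenpos s).ne'
      simpa [hQ] using this
    have h3 : HasDerivAt (fun s : ℝ => p * s) p s := by
      simpa using (hasDerivAt_id s).const_mul p
    exact h1.sub (h2.sub h3)
  have hg0 : g 0 = 0 := by simp [hg, hden]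
  have hgcont : Continuous g := by
    have : Differentiable ℝ g := fun s => (hgD s).differentiableAt
    exact this.continuous
  have hgnonneg : ∀ s, 0 ≤ g s := by
    intro s
    rcases le_total 0 s with hs | hs
    · have hmono : MonotoneOn g (Set.Ici (0:ℝ)) := by
        apply monotoneOn_of_deriv_nonneg (convex_Ici 0) hgcont.continuousOn
          (fun x _ => (hgD x).differentiableAt.differentiableWithinAt)
        intro x hx
        rw [interior_Ici] at hx
        rw [(hgD x).deriv]
        have hxx := hQlip x 0
        rw [hQ0, sub_zero, abs_of_pos (Set.mem_Ioi.mp hx)] at hxx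
        have h5 : Q x - p ≤ 1/4 * x := (abs_le.mp hxx).2
        linarith
      have := hmono (Set.self_mem_Ici) (Set.mem_Ici.mpr hs) hs
      rwa [hg0] at this
    · have hanti : AntitoneOn g (Set.Iic (0:ℝ)) := by
        apply antitoneOn_of_deriv_nonpos (convex_Iic 0) hgcont.continuousOn
          (fun x _ => (hgD x).differentiableAt.differentiableWithinAt)
        intro x hx
        rw [interior_Iic] at hx
        rw [(hgD x).deriv]
        have hxx := hQlip x 0
        rw [hQ0, sub_zero, abs_of_neg (Set.mem_Iio.mp hx)] at hxx
        have h5 : -(1/4 * -x) ≤ Q x - p := (abs_le.mp hxx).1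
        linarith
      have := hanti (Set.mem_Iic.mpr hs) Set.self_mem_Iic hs
      rwa [hg0] at this
  -- conclude
  have := hgnonneg h
  rw [hg] at this
  have hle : Real.log (den h) ≤ p * h + h ^ 2 / 8 := by simp at this; linarith
  calc (1 - p) + p * Real.exp h = den h := rfl
    _ = Real.exp (Real.log (den h)) := (Real.exp_log (hdenpos h)).symm
    _ ≤ Real.exp (p * h + h ^ 2 / 8) := Real.exp_le_exp.mpr hle

lemma mgf_le_hoeff {Ω : Type*} [MeasurableSpace Ω] (μ : Measure Ω) [IsProbabilityMeasure μ]
    (X : Ω → ℝ) (hX : Measurable X) (a b : ℝ) (hab : a < b)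
    (hbdd : ∀ ω, X ω ∈ Set.Icc a b) (t : ℝ) :
    mgf X μ t ≤ Real.exp (t * μ[X] + t ^ 2 * (b - a) ^ 2 / 8) := by
  have hba : 0 < b - a := by linarith
  have hXint : Integrable X μ := by
    refine ⟨hX.aestronglyMeasurable, ?_⟩
    apply HasFiniteIntegral.of_bounded (C := max |a| |b|)
    filter_upwards with ω
    rw [Real.norm_eq_abs]
    obtain ⟨h1, h2⟩ := hbdd ω
    rcases le_total 0 (X ω) with h | h
    · exact le_max_of_le_right (by rw [abs_of_nonneg h]; exact h2.trans (le_abs_self b))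
    · exact le_max_of_le_left (by rw [abs_of_nonpos h]; exact (neg_le_neg h1).trans (neg_le_abs a))
  set m := μ[X] with hm
  have hma : a ≤ m := by
    have := integral_mono (integrable_const a) hXint (fun ω => (hbdd ω).1)
    simpa using this
  have hmb : m ≤ b := by
    have := integral_mono hXint (integrable_const b) (fun ω => (hbdd ω).2)
    simpa using this
  -- pointwise convexity bound
  have hpt : ∀ ω, Real.exp (t * X ω) ≤
      (b - X ω) / (b - a) * Real.exp (t * a) + (X ω - a) / (b - a) * Real.exp (t * b) := by
    intro ω
    obtain ⟨h1, h2⟩ := hbdd ω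
    have hl1 : 0 ≤ (b - X ω) / (b - a) := div_nonneg (by linarith) hba.le
    have hl2 : 0 ≤ (X ω - a) / (b - a) := div_nonneg (by linarith) hba.le
    have hsum : (b - X ω) / (b - a) + (X ω - a) / (b - a) = 1 := by
      field_simp
      ring
    have := convexOn_exp.2 (Set.mem_univ (t * a)) (Set.mem_univ (t * b)) hl1 hl2 hsum
    simp only [smul_eq_mul] at this
    have harg : (b - X ω) / (b - a) * (t * a) + (X ω - a) / (b - a) * (t * b) = t * X ω := by
      field_simp
      ring
    rwa [harg] at this
  -- integrate
  have hexpint : Integrable (fun ω => Real.exp (t * X ω)) μ := by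
    refine ⟨(hX.const_mul t).exp.aestronglyMeasurable, ?_⟩
    apply HasFiniteIntegral.of_bounded (C := Real.exp (|t| * (max |a| |b|)))
    filter_upwards with ω
    rw [Real.norm_eq_abs, abs_of_pos (Real.exp_pos _), Real.exp_le_exp]
    calc t * X ω ≤ |t * X ω| := le_abs_self _
      _ = |t| * |X ω| := abs_mul t (X ω)
      _ ≤ |t| * max |a| |b| := by
          apply mul_le_mul_of_nonneg_left _ (abs_nonneg t)
          obtain ⟨h1, h2⟩ := hbdd ω
          rcases le_total 0 (X ω) with h | h
          · exact le_max_of_le_right (by rw [abs_of_nonneg h]; exact h2.trans (le_abs_self b))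
          · exact le_max_of_le_left (by rw [abs_of_nonpos h]; exact (neg_le_neg h1).trans (neg_le_abs a))
  have hrhsint : Integrable (fun ω =>
      (b - X ω) / (b - a) * Real.exp (t * a) + (X ω - a) / (b - a) * Real.exp (t * b)) μ := by
    apply Integrable.add
    · exact (((integrable_const b).sub hXint).div_const _).mul_const _
    · exact ((hXint.sub (integrable_const a)).div_const _).mul_const _
  have hIle : mgf X μ t ≤ (b - m) / (b - a) * Real.exp (t * a) + (m - a) / (b - a) * Real.exp (t * b) := by
    rw [mgf]
    calc μ[fun ω => Real.exp (t * X ω)]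
        ≤ μ[fun ω => (b - X ω) / (b - a) * Real.exp (t * a) + (X ω - a) / (b - a) * Real.exp (t * b)] :=
          by exact integral_mono hexpint hrhsint fun ω => hpt ω
      _ = (b - m) / (b - a) * Real.exp (t * a) + (m - a) / (b - a) * Real.exp (t * b) := by
          have hfe : (fun ω => (b - X ω) / (b - a) * Real.exp (t * a)
              + (X ω - a) / (b - a) * Real.exp (t * b))
              = fun ω => (b * Real.exp (t * a) - a * Real.exp (t * b)) / (b - a)
                + X ω * ((Real.exp (t * b) - Real.exp (t * a)) / (b - a)) := by
            funext ω
            field_simp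
            ring
          rw [hfe, integral_add (integrable_const _) (hXint.mul_const _),
            integral_const, integral_mul_const]
          simp only [measure_univ, ENNReal.toReal_one, probReal_univ, smul_eq_mul, one_mul, ← hm]
          field_simp
          ring
  refine hIle.trans ?_
  set p := (m - a) / (b - a) with hp
  have hp0 : 0 ≤ p := div_nonneg (by linarith) hba.le
  have hp1 : p ≤ 1 := by rw [hp, div_le_one hba]; linarith
  have key := hoeff_fun p hp0 hp1 (t * (b - a))
  have heq : (b - m) / (b - a) * Real.exp (t * a) + (m - a) / (b - a) * Real.exp (t * b)
      = Real.exp (t * a) * ((1 - p) + p * Real.exp (t * (b - a))) := by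
    have hE1 : Real.exp (t * a) ≠ 0 := (Real.exp_pos _).ne'
    have h2 : Real.exp (t * (b - a)) = Real.exp (t * b) / Real.exp (t * a) := by
      rw [← Real.exp_sub]
      ring_nf
    rw [hp, h2]
    field_simp
    ring
  rw [heq]
  calc Real.exp (t * a) * ((1 - p) + p * Real.exp (t * (b - a)))
      ≤ Real.exp (t * a) * Real.exp (p * (t * (b - a)) + (t * (b - a)) ^ 2 / 8) := by
        exact mul_le_mul_of_nonneg_left key (Real.exp_pos _).le
    _ = Real.exp (t * a + (p * (t * (b - a)) + (t * (b - a)) ^ 2 / 8)) := by rw [← Real.exp_add]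
    _ ≤ Real.exp (t * m + t ^ 2 * (b - a) ^ 2 / 8) := by
        rw [Real.exp_le_exp, hp]
        have : (m - a) / (b - a) * (t * (b - a)) = t * (m - a) := by field_simp
        rw [this]
        exact le_of_eq (by ring)

lemma integrable_exp_bdd {Ω : Type*} [MeasurableSpace Ω] (μ : Measure Ω)
    [IsProbabilityMeasure μ] (X : Ω → ℝ) (hX : Measurable X) (C : ℝ)
    (hC : ∀ ω, |X ω| ≤ C) (s : ℝ) :
    Integrable (fun ω => Real.exp (s * X ω)) μ := by
  refine ⟨((hX.const_mul s).exp).aestronglyMeasurable, ?_⟩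
  apply HasFiniteIntegral.of_bounded (C := Real.exp (|s| * C))
  filter_upwards with ω
  rw [Real.norm_eq_abs, abs_of_pos (Real.exp_pos _), Real.exp_le_exp]
  calc s * X ω ≤ |s * X ω| := le_abs_self _
    _ = |s| * |X ω| := abs_mul s (X ω)
    _ ≤ |s| * C := mul_le_mul_of_nonneg_left (hC ω) (abs_nonneg s)


/-- Lemma (expdecay): under the true hypothesis `i` (here `μ` is the
conditional law given `θ = i`), a fixed randomized rule drives all log
posterior ratios `log(ρᵢ(n)/ρⱼ(n))` up at rate at least
`R = min_{j≠i} Σ_a λ_a D(qᵢᵃ‖qⱼᵃ)`, so the stopping time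
`τᵢ = min{n : minⱼ ρᵢ(n)/ρⱼ(n) ≥ c}` has exponentially decaying tail:
for `n > (Tᵢ/R)(1+ι)`,
`P(τᵢ > n) ≤ (M-1) exp(-n (2ι²/(1+ι)²) (R/(2 log ξ))²)`. -/
theorem stopping_time_tail_bound
    (M : ℕ) (hM : 2 ≤ M) (i : Fin M)
    (herase : (Finset.univ.erase i : Finset (Fin M)).Nonempty)
    {Ω : Type*} [MeasurableSpace Ω] (μ : Measure Ω) [IsProbabilityMeasure μ]
    {A : Type*} [Fintype A]
    {Zs : Type*} [MeasurableSpace Zs] (ν : Measure Zs)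
    (q : A → Fin M → Zs → ℝ)
    (hq0 : ∀ a k z, 0 ≤ q a k z) (hq1 : ∀ a k, ∫ z, q a k z ∂ν = 1)
    -- pairwise KL divergences from hypothesis i
    (dK : A → Fin M → ℝ)
    (hdK : ∀ a j, dK a j = ∫ z, q a i z * Real.log (q a i z / q a j z) ∂ν)
    -- randomized rule and its worst-case reliability R = R(i, λ)
    (l : A → ℝ) (hl : l ∈ stdSimplex ℝ A)
    (R : ℝ)
    (hR : R = (Finset.univ.erase i).inf' herase (fun j => ∑ a : A, l a * dK a j))
    (hRpos : 0 < R)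
    -- prior
    (ρ : Fin M → ℝ) (hρ : ∀ k, 0 < ρ k)
    -- bounded likelihood ratios
    (ξ : ℝ) (hξ : 1 < ξ)
    -- per-step log-likelihood increments for each alternative j
    (W : Fin M → ℕ → Ω → ℝ)
    (hWmeas : ∀ j t, Measurable (W j t))
    (hindep : ∀ j, iIndepFun (W j) μ)
    (hWbdd : ∀ j t ω, |W j t ω| ≤ Real.log ξ)
    (hWint : ∀ j t, Integrable (W j t) μ)
    (hWmean : ∀ j ∈ Finset.univ.erase i, ∀ t, μ[W j t] = ∑ a : A, l a * dK a j)
    -- the log posterior ratio processes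
    (LR : Fin M → ℕ → Ω → ℝ)
    (hLR : ∀ j n ω, LR j n ω =
      Real.log (ρ i / ρ j) + ∑ t ∈ Finset.range n, W j t ω)
    -- threshold and the constant Tᵢ
    (c : ℝ) (hc : 1 < c)
    (Ti : ℝ)
    (hTi : Ti = Real.log c -
      (Finset.univ.erase i).inf' herase (fun k => Real.log (ρ i / ρ k))) :
    ∀ ι : ℝ, 0 < ι → ∀ n : ℕ, Ti / R * (1 + ι) < n →
      (μ {ω | ∀ m ≤ n, ∃ j, j ≠ i ∧ LR j m ω < Real.log c}).toReal ≤
        ((M : ℝ) - 1) *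
          Real.exp (-(n : ℝ) * (2 * ι ^ 2 / (1 + ι) ^ 2) *
            (R / (2 * Real.log ξ)) ^ 2) := by
  intro ι hι n hn
  classical
  set B := Real.log ξ with hBdef
  have hB : 0 < B := Real.log_pos hξ
  have hι1 : (0:ℝ) < 1 + ι := by linarith
  set bnd := Real.exp (-(n : ℝ) * (2 * ι ^ 2 / (1 + ι) ^ 2) * (R / (2 * B)) ^ 2) with hbnd
  set E : Fin M → Set Ω := fun j => {ω | (∑ t ∈ Finset.range n, W j t) ω ≤ Ti} with hE
  have hTiR : Ti * (1 + ι) < n * R := by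
    have h1 : Ti / R * (1 + ι) * R < n * R := mul_lt_mul_of_pos_right hn hRpos
    have h2 : Ti / R * (1 + ι) * R = Ti * (1 + ι) := by field_simp
    linarith
  -- Step 1: the event is contained in the union of the E j
  have hsub : {ω | ∀ m ≤ n, ∃ j, j ≠ i ∧ LR j m ω < Real.log c} ⊆
      ⋃ j ∈ (Finset.univ.erase i : Finset (Fin M)), E j := by
    intro ω hω
    obtain ⟨j, hji, hlt⟩ := hω n le_rfl
    have hjmem : j ∈ (Finset.univ.erase i : Finset (Fin M)) :=
      Finset.mem_erase.mpr ⟨hji, Finset.mem_univ j⟩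
    refine Set.mem_biUnion hjmem ?_
    have hinf : (Finset.univ.erase i).inf' herase (fun k => Real.log (ρ i / ρ k)) ≤
        Real.log (ρ i / ρ j) := Finset.inf'_le _ hjmem
    have hsum : ∑ t ∈ Finset.range n, W j t ω < Real.log c - Real.log (ρ i / ρ j) := by
      have := hLR j n ω
      linarith [hlt.trans_le (le_refl _), this ▸ hlt]
    have : (∑ t ∈ Finset.range n, W j t) ω ≤ Ti := by
      rw [Finset.sum_apply]
      have hlt2 : ∑ t ∈ Finset.range n, W j t ω < Real.log c - Real.log (ρ i / ρ j) := by
        have h3 := hLR j n ω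
        rw [h3] at hlt
        linarith
      rw [hTi]
      linarith
    exact this
  -- Step 2: per-j Chernoff bound
  have hper : ∀ j ∈ (Finset.univ.erase i : Finset (Fin M)), (μ (E j)).toReal ≤ bnd := by
    intro j hj
    set mj := ∑ a : A, l a * dK a j with hmj
    have hmjR : R ≤ mj := by rw [hR]; exact Finset.inf'_le _ hj
    set t0 : ℝ := -(R * ι / ((1 + ι) * B ^ 2)) with ht0def
    have ht0 : t0 ≤ 0 := by
      rw [ht0def, neg_nonpos]
      positivity
    have hSmeas : Measurable (∑ t ∈ Finset.range n, W j t) := by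
      have heq : (∑ t ∈ Finset.range n, W j t) = fun ω => ∑ t ∈ Finset.range n, W j t ω := by
        ext ω; simp [Finset.sum_apply]
      rw [heq]
      exact Finset.measurable_sum _ fun t _ => hWmeas j t
    have hSbdd : ∀ ω, |(∑ t ∈ Finset.range n, W j t) ω| ≤ n * B := by
      intro ω
      rw [Finset.sum_apply]
      calc |∑ t ∈ Finset.range n, W j t ω| ≤ ∑ t ∈ Finset.range n, |W j t ω| :=
            Finset.abs_sum_le_sum_abs _ _
        _ ≤ ∑ t ∈ Finset.range n, B := Finset.sum_le_sum fun t _ => hWbdd j t ω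
        _ = n * B := by rw [Finset.sum_const, Finset.card_range, nsmul_eq_mul]
    have hSint : Integrable (fun ω => Real.exp (t0 * (∑ t ∈ Finset.range n, W j t) ω)) μ :=
      integrable_exp_bdd μ _ hSmeas (n * B) hSbdd t0
    have hchern := measure_le_le_exp_mul_mgf (X := ∑ t ∈ Finset.range n, W j t)
      (μ := μ) Ti ht0 hSint
    have hmgfsum : mgf (∑ t ∈ Finset.range n, W j t) μ t0 =
        ∏ t ∈ Finset.range n, mgf (W j t) μ t0 :=
      (hindep j).mgf_sum (hWmeas j) (Finset.range n)
    have hmgfone : ∀ t, mgf (W j t) μ t0 ≤ Real.exp (t0 * mj + t0 ^ 2 * B ^ 2 / 2) := by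
      intro t
      have hbdd : ∀ ω, W j t ω ∈ Set.Icc (-B) B := fun ω => abs_le.mp (hWbdd j t ω)
      have := mgf_le_hoeff μ (W j t) (hWmeas j t) (-B) B (by linarith) hbdd t0
      rw [hWmean j hj t] at this
      refine this.trans (le_of_eq ?_)
      rw [hmj]
      congr 1
      ring
    have hprod : ∏ t ∈ Finset.range n, mgf (W j t) μ t0 ≤
        Real.exp ((n : ℝ) * (t0 * mj + t0 ^ 2 * B ^ 2 / 2)) := by
      calc ∏ t ∈ Finset.range n, mgf (W j t) μ t0
          ≤ ∏ t ∈ Finset.range n, Real.exp (t0 * mj + t0 ^ 2 * B ^ 2 / 2) :=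
            Finset.prod_le_prod (fun t _ => mgf_nonneg) (fun t _ => hmgfone t)
        _ = Real.exp (t0 * mj + t0 ^ 2 * B ^ 2 / 2) ^ n := by
            rw [Finset.prod_const, Finset.card_range]
        _ = Real.exp ((n : ℝ) * (t0 * mj + t0 ^ 2 * B ^ 2 / 2)) := by
            rw [← Real.exp_nat_mul]
    have hexp : Real.exp (-t0 * Ti) * Real.exp ((n : ℝ) * (t0 * mj + t0 ^ 2 * B ^ 2 / 2)) ≤ bnd := by
      rw [← Real.exp_add, hbnd, Real.exp_le_exp]
      have hkey : t0 * ((n : ℝ) * mj - Ti) ≤ t0 * ((n : ℝ) * R * ι / (1 + ι)) := by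
        apply mul_le_mul_of_nonpos_left _ ht0
        have h4 : Ti < (n : ℝ) * R / (1 + ι) := by
          rw [lt_div_iff₀ hι1]
          linarith
        have h5 : (n : ℝ) * R ≤ (n : ℝ) * mj :=
          mul_le_mul_of_nonneg_left hmjR (Nat.cast_nonneg n)
        have h6 : (n : ℝ) * R - (n : ℝ) * R * ι / (1 + ι) = (n : ℝ) * R / (1 + ι) := by
          field_simp
          ring
        linarith
      have halg : t0 * ((n : ℝ) * R * ι / (1 + ι)) + (n : ℝ) * (t0 ^ 2 * B ^ 2 / 2)
          = -(n : ℝ) * (2 * ι ^ 2 / (1 + ι) ^ 2) * (R / (2 * B)) ^ 2 := by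
        rw [ht0def]
        field_simp
        ring
      have hexpand : -t0 * Ti + (n : ℝ) * (t0 * mj + t0 ^ 2 * B ^ 2 / 2)
          = t0 * ((n : ℝ) * mj - Ti) + (n : ℝ) * (t0 ^ 2 * B ^ 2 / 2) := by ring
      rw [hexpand]
      linarith
    calc (μ (E j)).toReal ≤ Real.exp (-t0 * Ti) * mgf (∑ t ∈ Finset.range n, W j t) μ t0 :=
          hchern
      _ = Real.exp (-t0 * Ti) * ∏ t ∈ Finset.range n, mgf (W j t) μ t0 := by rw [hmgfsum]
      _ ≤ Real.exp (-t0 * Ti) * Real.exp ((n : ℝ) * (t0 * mj + t0 ^ 2 * B ^ 2 / 2)) :=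
          mul_le_mul_of_nonneg_left hprod (Real.exp_pos _).le
      _ ≤ bnd := hexp
  -- Step 3: union bound and counting
  have hmeasle : μ {ω | ∀ m ≤ n, ∃ j, j ≠ i ∧ LR j m ω < Real.log c} ≤
      ∑ j ∈ (Finset.univ.erase i : Finset (Fin M)), μ (E j) :=
    (measure_mono hsub).trans (measure_biUnion_finset_le _ _)
  have hsumne : (∑ j ∈ (Finset.univ.erase i : Finset (Fin M)), μ (E j)) ≠ ⊤ := by
    refine (ENNReal.sum_lt_top.mpr fun j _ => ?_).ne
    exact measure_lt_top μ _
  have htoReal : (μ {ω | ∀ m ≤ n, ∃ j, j ≠ i ∧ LR j m ω < Real.log c}).toReal ≤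
      ∑ j ∈ (Finset.univ.erase i : Finset (Fin M)), (μ (E j)).toReal := by
    have := ENNReal.toReal_mono hsumne hmeasle
    rwa [ENNReal.toReal_sum (fun j _ => (measure_lt_top μ _).ne)] at this
  have hcard : ((Finset.univ.erase i : Finset (Fin M)).card : ℝ) = (M : ℝ) - 1 := by
    rw [Finset.card_erase_of_mem (Finset.mem_univ i), Finset.card_univ, Fintype.card_fin]
    rw [Nat.cast_sub (by omega)]
    simp
  calc (μ {ω | ∀ m ≤ n, ∃ j, j ≠ i ∧ LR j m ω < Real.log c}).toReal
      ≤ ∑ j ∈ (Finset.univ.erase i : Finset (Fin M)), (μ (E j)).toReal := htoReal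
    _ ≤ ∑ j ∈ (Finset.univ.erase i : Finset (Fin M)), bnd := Finset.sum_le_sum hper
    _ = ((Finset.univ.erase i : Finset (Fin M)).card : ℝ) * bnd := by
        rw [Finset.sum_const, nsmul_eq_mul]
    _ = ((M : ℝ) - 1) * bnd := by rw [hcard]
end
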